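/- arXiv:1103.2706 — 3 statements merged into one kernel-verified Lean document; each statement's English description precedes it below -/
import Mathlib

section
/- Let N ≥ 1 and m ≥ 1. Let ρ be a pure density matrix on ℂ^N (ρ·ρ = ρ), let σ be a density matrix on ℂ^N, and let (M_μ)_{μ ∈ Fin m} be a Kraus family. Set p_μ := Re tr(M_μ ρ M_μ†) and q_μ := Re tr(M_μ σ M_μ†), and assume q_μ > 0 for every μ with p_μ > 0. For μ with p_μ > 0 define ρ_μ := M_μ ρ M_μ† / p_μ and σ_μ := M_μ σ M_μ† / q_μ. Then Σ_{μ : p_μ > 0} p_μ · Re tr(ρ_μ σ_μ) ≥ Re tr(ρ σ). (Discrete-time analogue of Diósi's result: for a pure true state, the Frobenius inner product between the state and the filter is a sub-martingale.) -/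
open Matrix Finset ComplexOrder

/-- The positive semidefinite square root of a matrix (junk value `0` if the matrix is not
positive semidefinite). -/
noncomputable def matSqrt {N : ℕ} (A : Matrix (Fin N) (Fin N) ℂ) : Matrix (Fin N) (Fin N) ℂ :=
  open scoped Classical MatrixOrder in
  if h : A.PosSemidef then CFC.sqrt A else 0

/-- The fidelity `F(ρ,σ) = Re tr √(√ρ σ √ρ)`. -/
noncomputable def fid {N : ℕ} (ρ σ : Matrix (Fin N) (Fin N) ℂ) : ℝ :=
  ((matSqrt (matSqrt ρ * σ * matSqrt ρ)).trace).re

/-- A density matrix: Hermitian, positive semidefinite, trace one. -/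
def IsDensity {N : ℕ} (ρ : Matrix (Fin N) (Fin N) ℂ) : Prop :=
  ρ.IsHermitian ∧ ρ.PosSemidef ∧ ρ.trace = 1


noncomputable def matToE {N : ℕ} (X : Matrix (Fin N) (Fin N) ℂ) :
    EuclideanSpace ℂ (Fin N × Fin N) := WithLp.toLp 2 (fun p : Fin N × Fin N => X p.1 p.2)

lemma trace_conj_eq_inner {N : ℕ} (X Y : Matrix (Fin N) (Fin N) ℂ) :
    (Xᴴ * Y).trace = inner ℂ (matToE X) (matToE Y) := by
  simp only [Matrix.trace, Matrix.diag, Matrix.mul_apply, Matrix.conjTranspose_apply,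
    PiLp.inner_apply, RCLike.inner_apply, matToE, PiLp.toLp_apply, Fintype.sum_prod_type]
  rw [Finset.sum_comm]
  exact Finset.sum_congr rfl fun _ _ => Finset.sum_congr rfl fun _ _ => mul_comm _ _

lemma frob_nonneg {N : ℕ} (X : Matrix (Fin N) (Fin N) ℂ) : 0 ≤ ((Xᴴ * X).trace).re := by
  rw [trace_conj_eq_inner]
  exact inner_self_nonneg (𝕜 := ℂ) (x := matToE X)

lemma frob_cs {N : ℕ} (X Y : Matrix (Fin N) (Fin N) ℂ) :
    ((Xᴴ * Y).trace).re ≤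
      Real.sqrt ((Xᴴ * X).trace).re * Real.sqrt ((Yᴴ * Y).trace).re := by
  rw [trace_conj_eq_inner, trace_conj_eq_inner, trace_conj_eq_inner]
  calc (inner ℂ (matToE X) (matToE Y) : ℂ).re ≤ ‖(inner ℂ (matToE X) (matToE Y) : ℂ)‖ :=
        Complex.re_le_norm _
    _ ≤ ‖matToE X‖ * ‖matToE Y‖ := norm_inner_le_norm _ _
    _ = _ := by rw [@norm_eq_sqrt_re_inner ℂ, @norm_eq_sqrt_re_inner ℂ]; rfl

lemma frob_eq_zero {N : ℕ} (X : Matrix (Fin N) (Fin N) ℂ) (h : ((Xᴴ * X).trace).re = 0) :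
    X = 0 := by
  rw [trace_conj_eq_inner] at h
  have h' : RCLike.re (inner ℂ (matToE X) (matToE X) : ℂ) = 0 := h
  have : ‖matToE X‖ = 0 := by
    rw [@norm_eq_sqrt_re_inner ℂ, h', Real.sqrt_zero]
  have h0 : matToE X = 0 := norm_eq_zero.mp this
  ext i j
  have := congrArg (fun w : EuclideanSpace ℂ (Fin N × Fin N) => w (i, j)) h0
  simpa [matToE] using this

open scoped MatrixOrder in
lemma psd_sqrt_facts {N : ℕ} (σ : Matrix (Fin N) (Fin N) ℂ) (h : σ.PosSemidef) :
    ∃ S : Matrix (Fin N) (Fin N) ℂ, Sᴴ = S ∧ S * S = σ :=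
  ⟨CFC.sqrt σ, (CFC.sqrt_nonneg σ).isSelfAdjoint, CFC.sqrt_mul_sqrt_self σ h.nonneg⟩

theorem frobenius_inner_product_submartingale_pure
    (N m : ℕ) (hN : 1 ≤ N) (hm : 1 ≤ m)
    (ρ σ : Matrix (Fin N) (Fin N) ℂ) (hρ : IsDensity ρ) (hσ : IsDensity σ)
    (hpure : ρ * ρ = ρ)
    (M : Fin m → Matrix (Fin N) (Fin N) ℂ)
    (hKraus : ∑ μ, (M μ)ᴴ * (M μ) = 1)
    (p q : Fin m → ℝ)
    (hp : ∀ μ, p μ = ((M μ * ρ * (M μ)ᴴ).trace).re)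
    (hq : ∀ μ, q μ = ((M μ * σ * (M μ)ᴴ).trace).re)
    (hqpos : ∀ μ, 0 < p μ → 0 < q μ) :
    ((ρ * σ).trace).re ≤
      ∑ μ ∈ Finset.univ.filter (fun μ => 0 < p μ),
        p μ * (((((p μ : ℂ))⁻¹ • (M μ * ρ * (M μ)ᴴ)) *
                (((q μ : ℂ))⁻¹ • (M μ * σ * (M μ)ᴴ))).trace).re := by
  have hρh : ρᴴ = ρ := hρ.1
  have hσpsd := hσ.2.1
  obtain ⟨S, hSh, hSS⟩ := psd_sqrt_facts σ hσpsd
  set A : Fin m → Matrix (Fin N) (Fin N) ℂ := fun μ => (M μ)ᴴ * M μ with hAdef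
  have hAh : ∀ μ, (A μ)ᴴ = A μ := fun μ => by
    simp [hAdef, Matrix.conjTranspose_mul]
  set u : Matrix (Fin N) (Fin N) ℂ := S * ρ with hudef
  set v : Fin m → Matrix (Fin N) (Fin N) ℂ := fun μ => S * (A μ * ρ) with hvdef
  set t : ℝ := ((ρ * σ).trace).re with htdef
  set x : Fin m → ℝ := fun μ => (((v μ)ᴴ * v μ).trace).re with hxdef
  set s : Fin m → ℝ := fun μ => ((uᴴ * v μ).trace).re with hsdef
  -- uᴴu trace
  have key_u : (uᴴ * u).trace = (ρ * σ).trace := by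
    have : uᴴ * u = ρ * (σ * ρ) := by
      simp only [hudef, Matrix.conjTranspose_mul, hρh, hSh, Matrix.mul_assoc]
      rw [← Matrix.mul_assoc S S, hSS]
    rw [this, Matrix.trace_mul_comm]
    simp only [Matrix.mul_assoc, hpure]
    rw [Matrix.trace_mul_comm]
  -- uᴴ v μ trace
  have key_s : ∀ μ, (uᴴ * v μ).trace = (σ * (A μ * ρ)).trace := by
    intro μ
    have : uᴴ * v μ = ρ * (σ * (A μ * ρ)) := by
      simp only [hudef, hvdef, Matrix.conjTranspose_mul, hρh, hSh, Matrix.mul_assoc]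
      rw [← Matrix.mul_assoc S S, hSS]
    rw [this, Matrix.trace_mul_comm]
    simp only [Matrix.mul_assoc, hpure]
  -- vᴴ v μ trace
  have key_x : ∀ μ, ((v μ)ᴴ * v μ).trace = (A μ * (σ * (A μ * ρ))).trace := by
    intro μ
    have : (v μ)ᴴ * v μ = ρ * (A μ * (σ * (A μ * ρ))) := by
      simp only [hvdef, Matrix.conjTranspose_mul, hρh, hSh, hAh, Matrix.mul_assoc]
      rw [← Matrix.mul_assoc S S, hSS]
    rw [this, Matrix.trace_mul_comm]
    simp only [Matrix.mul_assoc, hpure]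
  -- p μ as Frobenius norm of M μ * ρ
  have key_p : ∀ μ, p μ = (((M μ * ρ)ᴴ * (M μ * ρ)).trace).re := by
    intro μ
    have e1 : (M μ * ρ * (M μ)ᴴ).trace = ((M μ)ᴴ * (M μ * ρ)).trace :=
      Matrix.trace_mul_comm _ _
    have e2 : ((M μ * ρ)ᴴ * (M μ * ρ)).trace = ((M μ)ᴴ * (M μ * ρ)).trace := by
      simp only [Matrix.conjTranspose_mul, hρh, Matrix.mul_assoc]
      rw [Matrix.trace_mul_comm]
      simp only [Matrix.mul_assoc, hpure]
    rw [hp μ, e1, e2]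
  have hp_nonneg : ∀ μ, 0 ≤ p μ := fun μ => (key_p μ) ▸ frob_nonneg _
  -- q μ nonneg and sums to 1
  have key_q : ∀ μ, q μ = (((M μ * S)ᴴ * (M μ * S)).trace).re := by
    intro μ
    have e1 : (M μ * σ * (M μ)ᴴ).trace = ((M μ)ᴴ * (M μ * σ)).trace :=
      Matrix.trace_mul_comm _ _
    have e2 : ((M μ * S)ᴴ * (M μ * S)).trace = ((M μ)ᴴ * (M μ * σ)).trace := by
      simp only [Matrix.conjTranspose_mul, hSh, Matrix.mul_assoc]
      rw [Matrix.trace_mul_comm]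
      simp only [Matrix.mul_assoc, hSS]
    rw [hq μ, e1, e2]
  have hq_nonneg : ∀ μ, 0 ≤ q μ := fun μ => (key_q μ) ▸ frob_nonneg _
  have hq_tr : ∀ μ, q μ = ((A μ * σ).trace).re := by
    intro μ
    rw [hq μ, Matrix.trace_mul_comm]
    congr 2
    simp only [hAdef, Matrix.mul_assoc]
  have hq_sum : ∑ μ, q μ = 1 := by
    have : ∑ μ, (A μ * σ) = σ := by
      rw [← Finset.sum_mul, hKraus, one_mul]
    calc ∑ μ, q μ = ((∑ μ, (A μ * σ)).trace).re := by
          rw [Matrix.trace_sum, Complex.re_sum]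
          exact Finset.sum_congr rfl fun μ _ => hq_tr μ
      _ = 1 := by rw [this, hσ.2.2]; rfl
  -- terms with p μ = 0 vanish
  have hvanish : ∀ μ, ¬ 0 < p μ → s μ = 0 := by
    intro μ hμ
    have hp0 : p μ = 0 := le_antisymm (not_lt.mp hμ) (hp_nonneg μ)
    have hM0 : M μ * ρ = 0 := frob_eq_zero _ (by rw [← key_p μ]; exact hp0)
    have hA0 : A μ * ρ = 0 := by
      rw [hAdef]; simp only [Matrix.mul_assoc, hM0, Matrix.mul_zero]
    simp [hsdef, key_s μ, hA0]
  -- t = sum of s over the filter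
  have ht_sum : t = ∑ μ ∈ Finset.univ.filter (fun μ => 0 < p μ), s μ := by
    have h1 : ∑ μ, s μ = t := by
      have : ∑ μ, (σ * (A μ * ρ)) = σ * ρ := by
        rw [← Finset.mul_sum, ← Finset.sum_mul, hKraus, one_mul]
      calc ∑ μ, s μ = ((∑ μ, (σ * (A μ * ρ))).trace).re := by
            rw [Matrix.trace_sum, Complex.re_sum]
            exact Finset.sum_congr rfl fun μ _ => by rw [hsdef]; exact congrArg Complex.re (key_s μ)
        _ = t := by rw [this, htdef, Matrix.trace_mul_comm]
    rw [← h1, Finset.sum_filter_of_ne]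
    intro μ _ hne
    by_contra hμ
    exact hne (hvanish μ hμ)
    -- rewrite each RHS term as x μ / q μ
  have hx_nonneg : ∀ μ, 0 ≤ x μ := fun μ => frob_nonneg _
  have hRHS : ∀ μ ∈ Finset.univ.filter (fun μ => 0 < p μ),
      p μ * (((((p μ : ℂ))⁻¹ • (M μ * ρ * (M μ)ᴴ)) *
              (((q μ : ℂ))⁻¹ • (M μ * σ * (M μ)ᴴ))).trace).re = x μ / q μ := by
    intro μ hμ
    have hpμ : 0 < p μ := (Finset.mem_filter.mp hμ).2
    have hqμ : 0 < q μ := hqpos μ hpμ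
    have etr : (M μ * ρ * (M μ)ᴴ * (M μ * σ * (M μ)ᴴ)).trace
        = (A μ * (σ * (A μ * ρ))).trace := by
      rw [show M μ * ρ * (M μ)ᴴ * (M μ * σ * (M μ)ᴴ)
          = M μ * (ρ * ((M μ)ᴴ * (M μ * (σ * (M μ)ᴴ)))) by simp only [Matrix.mul_assoc],
        Matrix.trace_mul_comm,
        show ρ * ((M μ)ᴴ * (M μ * (σ * (M μ)ᴴ))) * M μ
          = ρ * ((M μ)ᴴ * (M μ * (σ * ((M μ)ᴴ * M μ)))) by simp only [Matrix.mul_assoc],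
        Matrix.trace_mul_comm]
      simp only [hAdef, Matrix.mul_assoc]
    have exμ : x μ = ((M μ * ρ * (M μ)ᴴ * (M μ * σ * (M μ)ᴴ)).trace).re := by
      rw [hxdef]; dsimp only; rw [key_x μ, etr]
    rw [smul_mul_assoc, mul_smul_comm, smul_smul, Matrix.trace_smul, smul_eq_mul,
      ← Complex.ofReal_inv, ← Complex.ofReal_inv, ← Complex.ofReal_mul,
      Complex.re_ofReal_mul, ← exμ]
    field_simp
  rw [Finset.sum_congr rfl hRHS]
  -- Cauchy-Schwarz per term
  have hcs : ∀ μ ∈ Finset.univ.filter (fun μ => 0 < p μ),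
      s μ ≤ Real.sqrt t * Real.sqrt (x μ) := by
    intro μ _
    have h := frob_cs u (v μ)
    rw [key_u] at h
    exact h
  set X : ℝ := ∑ μ ∈ Finset.univ.filter (fun μ => 0 < p μ), x μ / q μ with hXdef
  have hXnn : 0 ≤ X :=
    Finset.sum_nonneg fun μ _ => div_nonneg (hx_nonneg μ) (hq_nonneg μ)
  have step1 : t ≤ Real.sqrt t * ∑ μ ∈ Finset.univ.filter (fun μ => 0 < p μ),
      Real.sqrt (x μ) := by
    calc t = ∑ μ ∈ Finset.univ.filter (fun μ => 0 < p μ), s μ := ht_sum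
      _ ≤ ∑ μ ∈ Finset.univ.filter (fun μ => 0 < p μ),
            Real.sqrt t * Real.sqrt (x μ) := Finset.sum_le_sum hcs
      _ = _ := (Finset.mul_sum _ _ _).symm
  have step2 : ∑ μ ∈ Finset.univ.filter (fun μ => 0 < p μ), Real.sqrt (x μ)
      = ∑ μ ∈ Finset.univ.filter (fun μ => 0 < p μ),
          Real.sqrt (x μ / q μ) * Real.sqrt (q μ) := by
    refine Finset.sum_congr rfl fun μ hμ => ?_
    have hqμ : 0 < q μ := hqpos μ (Finset.mem_filter.mp hμ).2
    rw [← Real.sqrt_mul (div_nonneg (hx_nonneg μ) hqμ.le), div_mul_cancel₀ _ hqμ.ne']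
  have step3 : ∑ μ ∈ Finset.univ.filter (fun μ => 0 < p μ),
      Real.sqrt (x μ / q μ) * Real.sqrt (q μ)
      ≤ Real.sqrt X * Real.sqrt (∑ μ ∈ Finset.univ.filter (fun μ => 0 < p μ), q μ) :=
    Real.sum_sqrt_mul_sqrt_le _ (fun μ => div_nonneg (hx_nonneg μ) (hq_nonneg μ)) hq_nonneg
  have hqsumle : ∑ μ ∈ Finset.univ.filter (fun μ => 0 < p μ), q μ ≤ 1 := by
    calc ∑ μ ∈ Finset.univ.filter (fun μ => 0 < p μ), q μ ≤ ∑ μ, q μ :=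
          Finset.sum_le_sum_of_subset_of_nonneg (Finset.filter_subset _ _)
            fun i _ _ => hq_nonneg i
      _ = 1 := hq_sum
  have hsq1 : Real.sqrt (∑ μ ∈ Finset.univ.filter (fun μ => 0 < p μ), q μ) ≤ 1 := by
    rw [show (1 : ℝ) = Real.sqrt 1 by rw [Real.sqrt_one]]
    exact Real.sqrt_le_sqrt hqsumle
  have step4 : t ≤ Real.sqrt t * Real.sqrt X := by
    calc t ≤ Real.sqrt t * ∑ μ ∈ Finset.univ.filter (fun μ => 0 < p μ),
            Real.sqrt (x μ) := step1
      _ ≤ Real.sqrt t * (Real.sqrt X *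
            Real.sqrt (∑ μ ∈ Finset.univ.filter (fun μ => 0 < p μ), q μ)) := by
          rw [step2]
          exact mul_le_mul_of_nonneg_left step3 (Real.sqrt_nonneg t)
      _ ≤ Real.sqrt t * (Real.sqrt X * 1) :=
          mul_le_mul_of_nonneg_left
            (mul_le_mul_of_nonneg_left hsq1 (Real.sqrt_nonneg X)) (Real.sqrt_nonneg t)
      _ = Real.sqrt t * Real.sqrt X := by ring
  rcases le_or_gt t 0 with h | h
  · exact le_trans h hXnn
  · have hts : Real.sqrt t * Real.sqrt t ≤ Real.sqrt t * Real.sqrt X := by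
      rw [Real.mul_self_sqrt h.le]; exact step4
    have h5 : Real.sqrt t ≤ Real.sqrt X :=
      le_of_mul_le_mul_left hts (Real.sqrt_pos.mpr h)
    calc t = Real.sqrt t * Real.sqrt t := (Real.mul_self_sqrt h.le).symm
      _ ≤ Real.sqrt X * Real.sqrt X :=
          mul_le_mul h5 h5 (Real.sqrt_nonneg t) (Real.sqrt_nonneg X)
      _ = X := Real.mul_self_sqrt hXnn
end

section
/- Let L be an N×N complex matrix, α ∈ ℝ, and let ρ be an N×N complex matrix with tr(ρ) = 1. Set c₊ := tr((L† + αI)(L + αI)ρ) and c₋ := tr((L† − αI)(L − αI)ρ), and assume c₊ ≠ 0 and c₋ ≠ 0. Define Υ_α(ρ) := (L + αI)ρ(L† + αI)/c₊ − ρ and Υ_{−α}(ρ) := (L − αI)ρ(L† − αI)/c₋ − ρ. Then (1/2)·c₊·Υ_α(ρ) + (1/2)·c₋·Υ_{−α}(ρ) = LρL† − tr(L†Lρ)·ρ. (Exact identity for the mean jump contribution of the two Poisson channels in the homodyne-detection stochastic master equation: all α-dependent terms cancel.) -/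
open Matrix

theorem mean_jump_contribution_identity
    (N : ℕ) (L ρ : Matrix (Fin N) (Fin N) ℂ) (α : ℝ)
    (htr : ρ.trace = 1)
    (cp cm : ℂ)
    (hcp : cp = ((Lᴴ + (α : ℂ) • 1) * (L + (α : ℂ) • 1) * ρ).trace)
    (hcm : cm = ((Lᴴ - (α : ℂ) • 1) * (L - (α : ℂ) • 1) * ρ).trace)
    (hcp0 : cp ≠ 0) (hcm0 : cm ≠ 0)
    (Υp Υm : Matrix (Fin N) (Fin N) ℂ)
    (hΥp : Υp = cp⁻¹ • ((L + (α : ℂ) • 1) * ρ * (Lᴴ + (α : ℂ) • 1)) - ρ)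
    (hΥm : Υm = cm⁻¹ • ((L - (α : ℂ) • 1) * ρ * (Lᴴ - (α : ℂ) • 1)) - ρ) :
    ((1 / 2 : ℂ) * cp) • Υp + ((1 / 2 : ℂ) * cm) • Υm
      = L * ρ * Lᴴ - ((Lᴴ * L * ρ).trace) • ρ := by
  subst hΥp hΥm
  rw [smul_sub, smul_sub, smul_smul, smul_smul,
    mul_assoc (1/2 : ℂ) cp cp⁻¹, mul_inv_cancel₀ hcp0,
    mul_assoc (1/2 : ℂ) cm cm⁻¹, mul_inv_cancel₀ hcm0, mul_one]
  have hσ : cp + cm = 2 * (Lᴴ * L * ρ).trace + 2 * (α:ℂ)^2 := by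
    subst hcp hcm
    simp only [add_mul, mul_add, sub_mul, mul_sub, trace_add, trace_sub,
      smul_mul_assoc, mul_smul_comm, trace_smul, smul_eq_mul, one_mul, mul_one,
      smul_smul, htr]
    ring
  have hexp : (L + (α : ℂ) • 1) * ρ * (Lᴴ + (α : ℂ) • 1)
      + (L - (α : ℂ) • 1) * ρ * (Lᴴ - (α : ℂ) • 1)
      = (2:ℂ) • (L * ρ * Lᴴ) + ((α:ℂ)^2 * 2) • ρ := by
    simp only [add_mul, mul_add, sub_mul, mul_sub, smul_mul_assoc, mul_smul_comm,
      mul_one, one_mul, smul_smul]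
    module
  have key : ((1:ℂ)/2) • ((L + (α : ℂ) • 1) * ρ * (Lᴴ + (α : ℂ) • 1))
      + ((1:ℂ)/2) • ((L - (α : ℂ) • 1) * ρ * (Lᴴ - (α : ℂ) • 1))
      = L * ρ * Lᴴ + (α:ℂ)^2 • ρ := by
    rw [← smul_add, hexp]
    module
  have step : ((1/2 : ℂ)) • ((L + (α : ℂ) • 1) * ρ * (Lᴴ + (α : ℂ) • 1)) -
        (1 / 2 * cp) • ρ +
      (((1/2 : ℂ)) • ((L - (α : ℂ) • 1) * ρ * (Lᴴ - (α : ℂ) • 1)) -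
        (1 / 2 * cm) • ρ)
      = (L * ρ * Lᴴ + (α:ℂ)^2 • ρ) - ((1/2 : ℂ) * (cp + cm)) • ρ := by
    rw [← key]; module
  rw [step, hσ]
  module
end

section
/- Let H be a Hermitian N×N complex matrix, L an arbitrary N×N complex matrix, α ∈ ℝ, and ε > 0. Define B := (1/2)(L†L + α²I), M₀ := I − Bε − iHε, M₁ := √(ε/2)·(L + αI), and M₂ := √(ε/2)·(L − αI) (note M₀ equals I − (1/4)(L† + αI)(L + αI)ε − (1/4)(L† − αI)(L − αI)ε − iHε). Then M₀†M₀ + M₁†M₁ + M₂†M₂ = I + ε²·(B² − i(HB − BH) + H²). In particular, the first-order terms in ε cancel exactly, so that M₀†M₀ + M₁†M₁ + M₂†M₂ = I + O(ε²). (The key normalization computation in the Euler–Maruyama discretization of the Poisson-driven stochastic master equation, showing the discretization operators form a Kraus family up to second order in the time step.) -/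
open Matrix

theorem kraus_normalization_up_to_second_order
    (N : ℕ) (H L : Matrix (Fin N) (Fin N) ℂ) (hH : H.IsHermitian)
    (α ε : ℝ) (hε : 0 < ε)
    (B M₀ M₁ M₂ : Matrix (Fin N) (Fin N) ℂ)
    (hB : B = (1 / 2 : ℂ) • (Lᴴ * L + ((α : ℂ) ^ 2) • 1))
    (hM₀ : M₀ = 1 - (ε : ℂ) • B - ((ε : ℂ) * Complex.I) • H)
    (hM₁ : M₁ = ((Real.sqrt (ε / 2) : ℝ) : ℂ) • (L + (α : ℂ) • 1))
    (hM₂ : M₂ = ((Real.sqrt (ε / 2) : ℝ) : ℂ) • (L - (α : ℂ) • 1)) :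
    M₀ᴴ * M₀ + M₁ᴴ * M₁ + M₂ᴴ * M₂
      = 1 + ((ε : ℂ) ^ 2) • (B * B - Complex.I • (H * B - B * H) + H * H) := by
  obtain ⟨s, hs⟩ : ∃ s : ℝ, s = Real.sqrt (ε / 2) := ⟨_, rfl⟩
  have hc : (s : ℂ) * (s : ℂ) = (ε : ℂ) / 2 := by
    rw [← Complex.ofReal_mul, hs, Real.mul_self_sqrt (by positivity)]
    push_cast; ring
  have h12 : M₁ᴴ * M₁ + M₂ᴴ * M₂ = (ε : ℂ) • (Lᴴ * L + ((α : ℂ) ^ 2) • 1) := by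
    rw [hM₁, hM₂, ← hs]
    simp only [conjTranspose_smul, conjTranspose_add, conjTranspose_sub, conjTranspose_mul,
      conjTranspose_one, Complex.star_def, _root_.map_mul, Complex.conj_ofReal, star_smul,
      smul_mul_assoc, mul_smul_comm, mul_add, add_mul, mul_sub, sub_mul, mul_one, one_mul,
      smul_smul, smul_add, smul_sub]
    match_scalars <;>
      first
        | ring1
        | linear_combination hc
        | linear_combination (2 : ℂ) * hc
        | linear_combination (α : ℂ) ^ 2 * hc
        | linear_combination (2 : ℂ) * (α : ℂ) ^ 2 * hc
  rw [add_assoc, h12, hM₀, hB]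
  have hBstar : ((1 / 2 : ℂ) • (Lᴴ * L + ((α : ℂ) ^ 2) • 1))ᴴ
      = (1 / 2 : ℂ) • (Lᴴ * L + ((α : ℂ) ^ 2) • 1) := by
    simp only [conjTranspose_smul, conjTranspose_add, conjTranspose_mul, conjTranspose_one,
      conjTranspose_conjTranspose, Complex.star_def, map_div₀, _root_.map_one, map_ofNat,
      star_smul, map_pow, Complex.conj_ofReal]
  simp only [conjTranspose_sub, conjTranspose_smul, conjTranspose_one, hBstar, hH.eq,
    Complex.star_def, _root_.map_mul, Complex.conj_I, Complex.conj_ofReal]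
  simp only [mul_add, add_mul, mul_sub, sub_mul, mul_smul_comm, smul_mul_assoc, mul_one,
    one_mul, smul_smul, smul_add, smul_sub]
  match_scalars <;>
    first
      | ring1
      | linear_combination (-(ε : ℂ) ^ 2) * Complex.I_sq
end
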